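/- arXiv:1612.03068 — 3 statements merged into one kernel-verified Lean document; each statement's English description precedes it below -/
import Mathlib

section
/- Let φ = (1+√5)/2. For every positive integer k, ⌈⌊k·φ⌋·φ⌉ = ⌊k·φ²⌋. -/
theorem ceil_floor_phi (k : ℕ) (hk : 0 < k) :
    ⌈(⌊(k : ℝ) * ((1 + Real.sqrt 5) / 2)⌋ : ℝ) * ((1 + Real.sqrt 5) / 2)⌉ =
      ⌊(k : ℝ) * ((1 + Real.sqrt 5) / 2) ^ 2⌋ := by
  set s := Real.sqrt 5 with hs
  have hs2 : s ^ 2 = 5 := Real.sq_sqrt (by norm_num)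
  have hs0 : (0:ℝ) ≤ s := Real.sqrt_nonneg 5
  have hsl : (2:ℝ) < s := by nlinarith
  have hsu : s < 3 := by nlinarith
  have hirr : Irrational s := by
    rw [hs]; exact_mod_cast Nat.Prime.irrational_sqrt (by norm_num)
  set φ : ℝ := (1 + s) / 2 with hφ
  have hφirr : Irrational φ := by
    have h1 : Irrational ((1:ℚ) + s) := hirr.ratCast_add 1
    have h2 : Irrational (((1:ℚ) + s) / (2:ℚ)) := h1.div_ratCast (by norm_num)
    simpa using h2
  have hkφirr : Irrational ((k:ℝ) * φ) := hφirr.natCast_mul hk.ne'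
  set n : ℤ := ⌊(k:ℝ) * φ⌋ with hn
  have h1 : (n:ℝ) ≤ (k:ℝ) * φ := Int.floor_le _
  have h2 : (k:ℝ) * φ < n + 1 := Int.lt_floor_add_one _
  have h1' : (n:ℝ) < (k:ℝ) * φ := lt_of_le_of_ne h1 (Ne.symm (hkφirr.ne_int n))
  have hsq : φ ^ 2 = φ + 1 := by rw [hφ]; field_simp; nlinarith
  have hr : (k:ℝ) * φ ^ 2 = (k:ℝ) * φ + (k:ℕ) := by rw [hsq]; ring
  rw [hr, Int.floor_add_natCast, ← hn]
  rw [Int.ceil_eq_iff]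
  constructor
  · push_cast
    nlinarith
  · push_cast
    nlinarith
end

section
/- Let φ = (1+√5)/2. For every positive integer k, setting m = ⌊k·φ²⌋, one has ⌊k·φ⌋ = ⌊m·φ⌋ − m. -/
theorem n_from_m (k : ℕ) (hk : 0 < k) :
    ⌊(k : ℝ) * ((1 + Real.sqrt 5) / 2)⌋ =
      ⌊((⌊(k : ℝ) * ((1 + Real.sqrt 5) / 2) ^ 2⌋ : ℝ)) * ((1 + Real.sqrt 5) / 2)⌋ -
        ⌊(k : ℝ) * ((1 + Real.sqrt 5) / 2) ^ 2⌋ := by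
  set φ : ℝ := (1 + Real.sqrt 5) / 2 with hφ
  have h5 : Real.sqrt 5 ^ 2 = 5 := Real.sq_sqrt (by norm_num)
  have h5lb : 2 < Real.sqrt 5 := by nlinarith [Real.sqrt_nonneg 5]
  have h5ub : Real.sqrt 5 < 3 := by nlinarith [Real.sqrt_nonneg 5]
  have hφ2 : φ ^ 2 = φ + 1 := by rw [hφ]; nlinarith
  have hφlb : 3/2 < φ := by rw [hφ]; linarith
  have hφub : φ < 2 := by rw [hφ]; linarith
  set n : ℤ := ⌊(k : ℝ) * φ⌋ with hn
  have hm : ⌊(k : ℝ) * φ ^ 2⌋ = n + k := by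
    rw [hφ2, mul_add, mul_one, ← Int.floor_add_natCast]
  rw [hm]
  set f : ℝ := Int.fract ((k : ℝ) * φ) with hf
  have hfn : (n : ℝ) = (k : ℝ) * φ - f := by
    rw [hf, Int.self_sub_fract, hn]
  have hfnn : 0 ≤ f := Int.fract_nonneg _
  have hflt : f < 1 := Int.fract_lt_one _
  have key : (↑(n + k) : ℝ) * φ = (↑(n + k + n) : ℝ) + f * (2 - φ) := by
    push_cast
    rw [hfn]
    nlinarith [hφ2]
  have : ⌊(↑(n + k) : ℝ) * φ⌋ = n + k + n := by
    rw [key]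
    rw [Int.floor_eq_iff]
    constructor
    · nlinarith
    · push_cast
      nlinarith
  rw [this]; ring
end

section
/- With the doubling construction as above (d of length a² with values in (−a,a), d' of length 4a² built from blocks Bᵢ), if the original sequence satisfies: for all i ≡ j (mod a) with i ≠ j, dᵢ ≢ d_j (mod a), then the new sequence satisfies: for all i ≡ j (mod 2a) with i ≠ j (indices < 4a²), d'ᵢ ≢ d'_j (mod 2a). -/
theorem doubling_incongruent (a : ℕ) (ha : 0 < a) (d d' : ℕ → ℤ)
    (hd : ∀ i < a ^ 2, -(a : ℤ) < d i ∧ d i < a)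
    (hB1 : ∀ i < a, ∀ j < 2 * a, d' (2 * a * i + j) = d (a * i + j % a))
    (hB2 : ∀ i < a, ∀ j < 2 * a,
      d' (2 * a * (a + i) + j) =
        if j < a then d (a * i + j % a) + a else d (a * i + j % a) - a)
    (hmod : ∀ i < a ^ 2, ∀ j < a ^ 2, i % a = j % a → i ≠ j → ¬ ((a : ℤ) ∣ d i - d j)) :
    ∀ i < 4 * a ^ 2, ∀ j < 4 * a ^ 2, i % (2 * a) = j % (2 * a) → i ≠ j →
      ¬ ((2 * (a : ℤ)) ∣ d' i - d' j) := by
  have h2a : 0 < 2 * a := by omega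
  have hsq : 4 * a ^ 2 = 2 * a * (2 * a) := by ring
  have habs : ¬ ((2 * (a : ℤ)) ∣ (a : ℤ)) := by
    intro h
    have := Int.le_of_dvd (by exact_mod_cast ha) h
    omega
  intro i hi j hj hij hne hdvd
  obtain ⟨qi, r, hqi, hr, rfl⟩ : ∃ q s, q < 2 * a ∧ s < 2 * a ∧ i = 2 * a * q + s :=
    ⟨i / (2 * a), i % (2 * a), Nat.div_lt_of_lt_mul (by omega),
      Nat.mod_lt _ h2a, (Nat.div_add_mod _ _).symm⟩
  obtain ⟨qj, rj, hqj, hrj, rfl⟩ : ∃ q s, q < 2 * a ∧ s < 2 * a ∧ j = 2 * a * q + s :=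
    ⟨j / (2 * a), j % (2 * a), Nat.div_lt_of_lt_mul (by omega),
      Nat.mod_lt _ h2a, (Nat.div_add_mod _ _).symm⟩
  have hreq : r = rj := by
    have h1 : (2 * a * qi + r) % (2 * a) = r := by
      rw [Nat.mul_add_mod, Nat.mod_eq_of_lt hr]
    have h2 : (2 * a * qj + rj) % (2 * a) = rj := by
      rw [Nat.mul_add_mod, Nat.mod_eq_of_lt hrj]
    rw [h1, h2] at hij; exact hij
  subst hreq
  have hqne : qi ≠ qj := fun h => hne (by rw [h])
  have hs : r % a < a := Nat.mod_lt _ ha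
  have hidx : ∀ q < a, a * q + r % a < a ^ 2 := by
    intro q hq
    have h1 : a * q ≤ a * (a - 1) := Nat.mul_le_mul_left _ (by omega)
    have h2 : a ^ 2 = a * a := sq a
    have h3 : a * a = a * (a - 1) + a := by
      have h4 : a - 1 + 1 = a := by omega
      calc a * a = a * (a - 1 + 1) := by rw [h4]
        _ = a * (a - 1) + a := by ring
    omega
  have key : ∀ q1 < a, ∀ q2 < a, q1 ≠ q2 →
      ¬ ((a : ℤ) ∣ d (a * q1 + r % a) - d (a * q2 + r % a)) := by
    intro q1 h1 q2 h2 hq12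
    apply hmod _ (hidx q1 h1) _ (hidx q2 h2)
    · rw [Nat.mul_add_mod, Nat.mul_add_mod]
    · intro heq
      apply hq12
      have h5 : a * q1 = a * q2 := by omega
      exact Nat.eq_of_mul_eq_mul_left ha h5
  by_cases hqia : qi < a <;> by_cases hqja : qj < a
  · -- both bottom half
    rw [hB1 qi hqia r hr, hB1 qj hqja r hr] at hdvd
    obtain ⟨k, hk⟩ := hdvd
    exact key qi hqia qj hqja hqne ⟨2 * k, by linear_combination hk⟩
  · -- qi bottom, qj top
    have hqj' : qj - a < a := by omega
    have hrw : 2 * a * qj + r = 2 * a * (a + (qj - a)) + r := by congr 2; omega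
    rw [hB1 qi hqia r hr, hrw, hB2 (qj - a) hqj' r hr] at hdvd
    by_cases hra : r < a
    · rw [if_pos hra] at hdvd
      obtain ⟨k, hk⟩ := hdvd
      by_cases hqeq : qi = qj - a
      · rw [hqeq] at hk
        exact habs ⟨-k, by linear_combination -hk⟩
      · exact key qi hqia (qj - a) hqj' hqeq ⟨2 * k + 1, by linear_combination hk⟩
    · rw [if_neg hra] at hdvd
      obtain ⟨k, hk⟩ := hdvd
      by_cases hqeq : qi = qj - a
      · rw [hqeq] at hk
        exact habs ⟨k, by linear_combination hk⟩
      · exact key qi hqia (qj - a) hqj' hqeq ⟨2 * k - 1, by linear_combination hk⟩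
  · -- qi top, qj bottom
    have hqi' : qi - a < a := by omega
    have hrw : 2 * a * qi + r = 2 * a * (a + (qi - a)) + r := by congr 2; omega
    rw [hrw, hB2 (qi - a) hqi' r hr, hB1 qj hqja r hr] at hdvd
    by_cases hra : r < a
    · rw [if_pos hra] at hdvd
      obtain ⟨k, hk⟩ := hdvd
      by_cases hqeq : qi - a = qj
      · rw [hqeq] at hk
        exact habs ⟨k, by linear_combination hk⟩
      · exact key (qi - a) hqi' qj hqja hqeq ⟨2 * k - 1, by linear_combination hk⟩
    · rw [if_neg hra] at hdvd
      obtain ⟨k, hk⟩ := hdvd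
      by_cases hqeq : qi - a = qj
      · rw [hqeq] at hk
        exact habs ⟨-k, by linear_combination -hk⟩
      · exact key (qi - a) hqi' qj hqja hqeq ⟨2 * k + 1, by linear_combination hk⟩
  · -- both top half
    have hqi' : qi - a < a := by omega
    have hqj' : qj - a < a := by omega
    have hrwi : 2 * a * qi + r = 2 * a * (a + (qi - a)) + r := by congr 2; omega
    have hrwj : 2 * a * qj + r = 2 * a * (a + (qj - a)) + r := by congr 2; omega
    rw [hrwi, hB2 (qi - a) hqi' r hr, hrwj, hB2 (qj - a) hqj' r hr] at hdvd
    have hqne' : qi - a ≠ qj - a := by omega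
    by_cases hra : r < a
    · rw [if_pos hra, if_pos hra] at hdvd
      obtain ⟨k, hk⟩ := hdvd
      exact key (qi - a) hqi' (qj - a) hqj' hqne' ⟨2 * k, by linear_combination hk⟩
    · rw [if_neg hra, if_neg hra] at hdvd
      obtain ⟨k, hk⟩ := hdvd
      exact key (qi - a) hqi' (qj - a) hqj' hqne' ⟨2 * k, by linear_combination hk⟩
end
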